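/- Under the game setup below, suppose the quasidominance condition holds with witness vector r. Then the game is strictly monotone: there exist constants λ_1,…,λ_N > 0 such that for all x, y ∈ ∏_i 𝒳_i with x ≠ y, Σ_{i=1}^{N} λ_i · ⟨G_i(x) − G_i(y), x_i − y_i⟩ > 0. -/

import Mathlib

open scoped RealInnerProductSpace

open Finset

lemma quasidominant_core {N : ℕ} (hN : 0 < N) (μ : Fin N → ℝ) (hμ : ∀ i, 0 < μ i)
    (L : Fin N → Fin N → ℝ) (hL : ∀ i j, 0 ≤ L i j)
    (r : Fin N → ℝ) (hr : ∀ i, 0 < r i)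
    (hq : ∀ i, ∑ j ∈ Finset.univ.erase i, r j * L i j < r i * μ i) :
    ∃ lam : Fin N → ℝ, (∀ i, 0 < lam i) ∧
      ∀ a : Fin N → ℝ, (∀ i, 0 ≤ a i) → a ≠ 0 →
        0 < ∑ i, lam i *
          (μ i * a i ^ 2 - (∑ j ∈ Finset.univ.erase i, L i j * a j) * a i) := by
  have hne : (Finset.univ : Finset (Fin N)).Nonempty := ⟨⟨0, hN⟩, mem_univ _⟩
  set A : Matrix (Fin N) (Fin N) ℝ :=
    Matrix.of fun i j => if j = i then 0 else r j * L i j / (r i * μ i) with hA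
  have hA0 : ∀ i j, 0 ≤ A i j := by
    intro i j
    simp only [hA, Matrix.of_apply]
    split
    · exact le_refl 0
    · exact div_nonneg (mul_nonneg (hr j).le (hL i j)) (mul_nonneg (hr i).le (hμ i).le)
  have hAdiag : ∀ i, A i i = 0 := by intro i; simp [hA]
  have hrowsum : ∀ i, ∑ j, A i j = (∑ j ∈ univ.erase i, r j * L i j) / (r i * μ i) := by
    intro i
    rw [Finset.sum_div]
    rw [← Finset.sum_erase (univ : Finset (Fin N)) (f := fun j => A i j) (hAdiag i)]
    refine Finset.sum_congr rfl fun j hj => ?_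
    have : j ≠ i := Finset.ne_of_mem_erase hj
    simp [hA, this]
  set θ : ℝ := univ.sup' hne (fun i => ∑ j, A i j) with hθdef
  have hθ : ∀ i, ∑ j, A i j ≤ θ := fun i => Finset.le_sup' (fun i => ∑ j, A i j) (mem_univ i)
  have hθ0 : 0 ≤ θ :=
    le_trans (Finset.sum_nonneg fun j _ => hA0 ⟨0, hN⟩ j) (hθ ⟨0, hN⟩)
  have hθ1 : θ < 1 := by
    rw [hθdef, Finset.sup'_lt_iff]
    intro i _
    rw [hrowsum i, div_lt_one (mul_pos (hr i) (hμ i))]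
    exact hq i
  have hpow0 : ∀ k, ∀ i j, 0 ≤ (A ^ k) i j := by
    intro k
    induction k with
    | zero => intro i j; rw [pow_zero, Matrix.one_apply]; split <;> norm_num
    | succ k ih =>
      intro i j
      rw [pow_succ, Matrix.mul_apply]
      exact Finset.sum_nonneg fun l _ => mul_nonneg (ih i l) (hA0 l j)
  have hpowrow : ∀ k, ∀ i, ∑ j, (A ^ k) i j ≤ θ ^ k := by
    intro k
    induction k with
    | zero => intro i; simp [Matrix.one_apply]
    | succ k ih =>
      intro i
      calc ∑ j, (A ^ (k+1)) i j = ∑ j, ∑ l, (A ^ k) i l * A l j := by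
            simp [pow_succ, Matrix.mul_apply]
        _ = ∑ l, (A ^ k) i l * ∑ j, A l j := by
            rw [Finset.sum_comm]; simp [Finset.mul_sum]
        _ ≤ ∑ l, (A ^ k) i l * θ :=
            Finset.sum_le_sum fun l _ =>
              mul_le_mul_of_nonneg_left (hθ l) (hpow0 k i l)
        _ = (∑ l, (A ^ k) i l) * θ := by rw [Finset.sum_mul]
        _ ≤ θ ^ k * θ := mul_le_mul_of_nonneg_right (ih i) hθ0
        _ = θ ^ (k+1) := by ring
  obtain ⟨m, hm⟩ : ∃ m, θ ^ m < ((N : ℝ) + 1)⁻¹ :=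
    exists_pow_lt_of_lt_one (by positivity) hθ1
  set δ : ℝ := 1 - N * θ ^ (m + 1) with hδdef
  have hδ : 0 < δ := by
    have h1 : θ ^ (m+1) ≤ θ ^ m := pow_le_pow_of_le_one hθ0 hθ1.le (Nat.le_succ m)
    have h2 : (N : ℝ) * θ ^ (m+1) ≤ N * θ ^ m :=
      mul_le_mul_of_nonneg_left h1 (Nat.cast_nonneg N)
    have h3 : (N : ℝ) * θ ^ m < N * ((N : ℝ) + 1)⁻¹ := by
      have hNpos : (0:ℝ) < N := by exact_mod_cast hN
      exact mul_lt_mul_of_pos_left hm hNpos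
    have h4 : (N : ℝ) * ((N : ℝ) + 1)⁻¹ < 1 := by
      rw [mul_inv_lt_iff₀ (by positivity)]
      linarith
    simp only [hδdef]
    linarith
  set p : Fin N → ℝ := fun jj => ∑ k ∈ Finset.range (m + 1), ∑ i, (A ^ k) i jj with hpdef
  have hp1 : ∀ j, 1 ≤ p j := by
    intro j
    have h0 : (∑ i, (A ^ 0) i j) = 1 := by simp [Matrix.one_apply]
    calc (1:ℝ) = ∑ i, (A ^ 0) i j := h0.symm
      _ ≤ p j := Finset.single_le_sum (f := fun k => ∑ i, (A ^ k) i j)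
          (fun k _ => Finset.sum_nonneg fun i _ => hpow0 k i j)
          (Finset.mem_range.mpr (Nat.succ_pos m))
  have hp0 : ∀ j, 0 < p j := fun j => lt_of_lt_of_le one_pos (hp1 j)
  have hcol : ∀ j, ∑ i, p i * A i j ≤ p j - δ := by
    intro j
    have key : ∑ i, p i * A i j = ∑ k ∈ Finset.range (m+1), ∑ l, (A ^ (k+1)) l j := by
      simp only [hpdef, Finset.sum_mul]
      rw [Finset.sum_comm]
      refine Finset.sum_congr rfl fun k _ => ?_
      rw [Finset.sum_comm]
      refine Finset.sum_congr rfl fun l _ => ?_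
      rw [pow_succ, Matrix.mul_apply]
    have h1 : ∑ k ∈ Finset.range (m+2), (∑ l, (A ^ k) l j)
        = (∑ k ∈ Finset.range (m+1), ∑ l, (A ^ (k+1)) l j) + ∑ l, (A ^ 0) l j :=
      Finset.sum_range_succ' _ _
    have h2 : ∑ k ∈ Finset.range (m+2), (∑ l, (A ^ k) l j)
        = p j + ∑ l, (A ^ (m+1)) l j := Finset.sum_range_succ _ _
    have h0 : (∑ l, (A ^ 0) l j) = 1 := by simp [Matrix.one_apply]
    have hlast : ∑ l, (A ^ (m+1)) l j ≤ N * θ ^ (m+1) := by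
      calc ∑ l, (A ^ (m+1)) l j ≤ ∑ _l : Fin N, θ ^ (m+1) :=
            Finset.sum_le_sum fun l _ =>
              le_trans (Finset.single_le_sum (f := fun j' => (A ^ (m+1)) l j')
                (fun j' _ => hpow0 _ l j') (mem_univ j)) (hpowrow (m+1) l)
        _ = N * θ ^ (m+1) := by simp [mul_comm]
    rw [h0] at h1
    rw [key, hδdef]
    linarith
  refine ⟨fun i => p i / (μ i * r i ^ 2), fun i => div_pos (hp0 i) (mul_pos (hμ i) (pow_pos (hr i) 2)), ?_⟩
  intro a ha0 hane
  obtain ⟨i0, hi0⟩ : ∃ i, a i ≠ 0 := by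
    by_contra h
    push_neg at h
    exact hane (funext h)
  set b : Fin N → ℝ := fun i => a i / r i with hbdef
  have hb0 : ∀ i, 0 ≤ b i := fun i => div_nonneg (ha0 i) (hr i).le
  have hbi0 : 0 < b i0 := by
    have : 0 < a i0 := lt_of_le_of_ne (ha0 i0) (Ne.symm hi0)
    exact div_pos this (hr i0)
  have hab : ∀ i, a i = r i * b i := by
    intro i
    have h2 : r i ≠ 0 := (hr i).ne'
    simp only [hbdef]
    field_simp
  have hterm : ∀ i, p i / (μ i * r i ^ 2) *
      (μ i * a i ^ 2 - (∑ j ∈ univ.erase i, L i j * a j) * a i)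
      = p i * b i ^ 2 - ∑ j, p i * A i j * (b i * b j) := by
    intro i
    have e1 : p i / (μ i * r i ^ 2) * (μ i * a i ^ 2) = p i * b i ^ 2 := by
      rw [hab i]
      have h1 : μ i ≠ 0 := (hμ i).ne'
      have h2 : r i ≠ 0 := (hr i).ne'
      field_simp
    have e2 : p i / (μ i * r i ^ 2) * ((∑ j ∈ univ.erase i, L i j * a j) * a i)
        = ∑ j, p i * A i j * (b i * b j) := by
      rw [← Finset.sum_erase (univ : Finset (Fin N)) (a := i)
            (f := fun j => p i * A i j * (b i * b j)) (by simp [hAdiag i])]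
      rw [Finset.sum_mul, Finset.mul_sum]
      refine Finset.sum_congr rfl fun j hj => ?_
      have hji : j ≠ i := Finset.ne_of_mem_erase hj
      simp only [hA, Matrix.of_apply, if_neg hji]
      rw [hab i, hab j]
      have h1 : μ i ≠ 0 := (hμ i).ne'
      have h2 : r i ≠ 0 := (hr i).ne'
      have h3 : r j ≠ 0 := (hr j).ne'
      field_simp
    rw [mul_sub, e1, e2]
  have hsum : ∑ i, p i / (μ i * r i ^ 2) *
      (μ i * a i ^ 2 - (∑ j ∈ univ.erase i, L i j * a j) * a i)
      = ∑ i, p i * b i ^ 2 - ∑ i, ∑ j, p i * A i j * (b i * b j) := by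
    rw [← Finset.sum_sub_distrib]
    exact Finset.sum_congr rfl fun i _ => hterm i
  rw [hsum]
  -- bound the cross term
  have c1 : ∑ i, ∑ j, p i * A i j * b i ^ 2 ≤ θ * ∑ i, p i * b i ^ 2 := by
    rw [Finset.mul_sum]
    refine Finset.sum_le_sum fun i _ => ?_
    have : ∑ j, p i * A i j * b i ^ 2 = (∑ j, A i j) * (p i * b i ^ 2) := by
      rw [Finset.sum_mul]
      exact Finset.sum_congr rfl fun j _ => by ring
    rw [this]
    calc (∑ j, A i j) * (p i * b i ^ 2) ≤ θ * (p i * b i ^ 2) :=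
          mul_le_mul_of_nonneg_right (hθ i)
            (mul_nonneg (hp0 i).le (sq_nonneg _))
      _ = θ * (p i * b i ^ 2) := rfl
  have c2 : ∑ i, ∑ j, p i * A i j * b j ^ 2 ≤ ∑ j, (p j - δ) * b j ^ 2 := by
    rw [Finset.sum_comm]
    refine Finset.sum_le_sum fun j _ => ?_
    have : ∑ i, p i * A i j * b j ^ 2 = (∑ i, p i * A i j) * b j ^ 2 := by
      rw [Finset.sum_mul]
    rw [this]
    exact mul_le_mul_of_nonneg_right (hcol j) (sq_nonneg _)
  have hcross : ∑ i, ∑ j, p i * A i j * (b i * b j)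
      ≤ (∑ i, ∑ j, p i * A i j * b i ^ 2) / 2
        + (∑ i, ∑ j, p i * A i j * b j ^ 2) / 2 := by
    rw [Finset.sum_div, Finset.sum_div, ← Finset.sum_add_distrib]
    refine Finset.sum_le_sum fun i _ => ?_
    rw [Finset.sum_div, Finset.sum_div, ← Finset.sum_add_distrib]
    refine Finset.sum_le_sum fun j _ => ?_
    have h := mul_nonneg (hp0 i).le (hA0 i j)
    nlinarith [sq_nonneg (b i - b j)]
  have hSd : ∑ j, (p j - δ) * b j ^ 2
      = ∑ j, p j * b j ^ 2 - δ * ∑ j, b j ^ 2 := by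
    rw [Finset.mul_sum, ← Finset.sum_sub_distrib]
    exact Finset.sum_congr rfl fun j _ => by ring
  have hS1 : 0 ≤ ∑ i, p i * b i ^ 2 :=
    Finset.sum_nonneg fun i _ => mul_nonneg (hp0 i).le (sq_nonneg _)
  have hSb : b i0 ^ 2 ≤ ∑ j, b j ^ 2 :=
    Finset.single_le_sum (f := fun j => b j ^ 2) (fun j _ => sq_nonneg _) (mem_univ i0)
  have hbi0sq : 0 < b i0 ^ 2 := by positivity
  nlinarith [mul_le_mul_of_nonneg_left c1 (by norm_num : (0:ℝ) ≤ 1/2)]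

open scoped RealInnerProductSpace
open Finset

lemma step1_path {N d : ℕ} (𝒳 : Fin N → Set (EuclideanSpace ℝ (Fin d)))
    (G : Fin N → (Fin N → EuclideanSpace ℝ (Fin d)) → EuclideanSpace ℝ (Fin d))
    (L : Fin N → Fin N → ℝ)
    (hlip : ∀ i j (x : Fin N → EuclideanSpace ℝ (Fin d)), (∀ k, x k ∈ 𝒳 k) →
      ∀ yj ∈ 𝒳 j, ‖G i x - G i (Function.update x j yj)‖ ≤ L i j * ‖x j - yj‖)
    (i : Fin N) (x y : Fin N → EuclideanSpace ℝ (Fin d))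
    (hx : ∀ j, x j ∈ 𝒳 j) (hy : ∀ j, y j ∈ 𝒳 j) :
    ‖G i (Function.update x i (y i)) - G i y‖
      ≤ ∑ j ∈ Finset.univ.erase i, L i j * ‖x j - y j‖ := by
  set w : ℕ → (Fin N → EuclideanSpace ℝ (Fin d)) :=
    fun k => fun j => if i = j ∨ (j : ℕ) < k then y j else x j with hw
  have hwmem : ∀ k j, w k j ∈ 𝒳 j := by
    intro k j
    simp only [hw]
    split
    · exact hy j
    · exact hx j
  have hw0 : w 0 = Function.update x i (y i) := by
    funext j
    simp only [hw, Nat.not_lt_zero, or_false]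
    by_cases h : j = i
    · subst h; simp
    · rw [Function.update_of_ne h]
      rw [if_neg (fun hc => h hc.symm)]
  have hwN : w N = y := by
    funext j
    simp [hw, j.is_lt]
  set c : ℕ → ℝ := fun k =>
    if h : k < N then
      (if (⟨k, h⟩ : Fin N) = i then 0 else L i ⟨k, h⟩ * ‖x ⟨k, h⟩ - y ⟨k, h⟩‖)
    else 0 with hc
  have hstep : ∀ k ∈ Finset.range N,
      dist (G i (w k)) (G i (w (k + 1))) ≤ c k := by
    intro k hk
    rw [Finset.mem_range] at hk
    set k' : Fin N := ⟨k, hk⟩ with hk'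
    by_cases hki : k' = i
    · have : w (k + 1) = w k := by
        funext j
        simp only [hw]
        by_cases h1 : i = j
        · simp [h1]
        · have : ((j : ℕ) < k + 1) ↔ ((j : ℕ) < k) := by
            constructor
            · intro h
              rcases Nat.lt_succ_iff_lt_or_eq.mp h with h' | h'
              · exact h'
              · exact absurd (hki.symm.trans ((Fin.ext h' : j = k')).symm) h1
            · omega
          simp [this]
      rw [this, dist_self]
      simp only [hc]
      rw [dif_pos hk, if_pos hki]
    · have hupd : w (k + 1) = Function.update (w k) k' (y k') := by
        funext j
        by_cases hj : j = k'
        · subst hj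
          simp only [hw, Function.update_self]
          rw [if_pos (Or.inr (by simp [hk']))]
        · rw [Function.update_of_ne hj]
          simp only [hw]
          have : ((j : ℕ) < k + 1) ↔ ((j : ℕ) < k) := by
            have : (j : ℕ) ≠ k := fun h => hj (Fin.ext h)
            omega
          simp [this]
      have hwkk : w k k' = x k' := by
        simp only [hw]
        rw [if_neg]
        push_neg
        exact ⟨fun h => hki (Fin.ext (congrArg Fin.val h)).symm, by simp [hk']⟩
      rw [dist_eq_norm, hupd]
      calc ‖G i (w k) - G i (Function.update (w k) k' (y k'))‖
          ≤ L i k' * ‖w k k' - y k'‖ := hlip i k' (w k) (hwmem k) (y k') (hy k')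
        _ = c k := by
            rw [hwkk]
            simp only [hc]
            rw [dif_pos hk, if_neg hki]
  have htele : dist (G i (w 0)) (G i (w N))
      ≤ ∑ k ∈ Finset.range N, dist (G i (w k)) (G i (w (k + 1))) :=
    dist_le_range_sum_dist (fun k => G i (w k)) N
  have hsum : ∑ k ∈ Finset.range N, c k
      = ∑ j ∈ Finset.univ.erase i, L i j * ‖x j - y j‖ := by
    rw [← Fin.sum_univ_eq_sum_range]
    have h1 : ∀ j : Fin N, c (j : ℕ)
        = if j = i then 0 else L i j * ‖x j - y j‖ := by
      intro j
      simp only [hc]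
      rw [dif_pos j.is_lt]
    rw [Finset.sum_congr rfl fun j _ => h1 j]
    rw [← Finset.sum_erase (univ : Finset (Fin N)) (a := i)
          (f := fun j => if j = i then 0 else L i j * ‖x j - y j‖) (by simp)]
    exact Finset.sum_congr rfl fun j hj => by
      rw [if_neg (Finset.ne_of_mem_erase hj)]
  calc ‖G i (Function.update x i (y i)) - G i y‖
      = dist (G i (w 0)) (G i (w N)) := by rw [hw0, hwN, dist_eq_norm]
    _ ≤ ∑ k ∈ Finset.range N, dist (G i (w k)) (G i (w (k + 1))) := htele
    _ ≤ ∑ k ∈ Finset.range N, c k := Finset.sum_le_sum hstep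
    _ = ∑ j ∈ Finset.univ.erase i, L i j * ‖x j - y j‖ := hsum

/-- Quasidominance implies strict monotonicity of the game: there are positive
weights `λ i` such that `∑ i, λ i ⟪G i x - G i y, x i - y i⟫ > 0` for all
distinct action profiles `x ≠ y` in the joint action set. -/
theorem quasidominant_game_strictly_monotone {N d : ℕ}
    (𝒳 : Fin N → Set (EuclideanSpace ℝ (Fin d)))
    (hclosed : ∀ i, IsClosed (𝒳 i)) (hconvex : ∀ i, Convex ℝ (𝒳 i))
    (G : Fin N → (Fin N → EuclideanSpace ℝ (Fin d)) → EuclideanSpace ℝ (Fin d))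
    (μ : Fin N → ℝ) (hμ : ∀ i, 0 < μ i)
    (hmono : ∀ i (x : Fin N → EuclideanSpace ℝ (Fin d)), (∀ j, x j ∈ 𝒳 j) →
      ∀ yi ∈ 𝒳 i, μ i * ‖x i - yi‖ ^ 2 ≤ ⟪G i x - G i (Function.update x i yi), x i - yi⟫)
    (L : Fin N → Fin N → ℝ) (hL : ∀ i j, 0 ≤ L i j)
    (hlip : ∀ i j (x : Fin N → EuclideanSpace ℝ (Fin d)), (∀ k, x k ∈ 𝒳 k) →
      ∀ yj ∈ 𝒳 j, ‖G i x - G i (Function.update x j yj)‖ ≤ L i j * ‖x j - yj‖)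
    (r : Fin N → ℝ) (hr : ∀ i, 0 < r i)
    (hq : ∀ i, ∑ j ∈ Finset.univ.erase i, r j * L i j < r i * μ i) :
    ∃ lam : Fin N → ℝ, (∀ i, 0 < lam i) ∧
      ∀ x y : Fin N → EuclideanSpace ℝ (Fin d),
        (∀ j, x j ∈ 𝒳 j) → (∀ j, y j ∈ 𝒳 j) → x ≠ y →
        0 < ∑ i, lam i * ⟪G i x - G i y, x i - y i⟫ := by
  rcases Nat.eq_zero_or_pos N with hN0 | hN
  · subst hN0
    exact ⟨fun _ => 1, fun i => one_pos,
      fun x y _ _ hxy => absurd (funext fun i => i.elim0) hxy⟩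
  obtain ⟨lam, hlam, hkey⟩ := quasidominant_core hN μ hμ L hL r hr hq
  refine ⟨lam, hlam, ?_⟩
  intro x y hx hy hxy
  set a : Fin N → ℝ := fun i => ‖x i - y i‖ with ha
  have ha0 : ∀ i, 0 ≤ a i := fun i => norm_nonneg _
  have hane : a ≠ 0 := by
    intro h
    apply hxy
    funext i
    have h1 : ‖x i - y i‖ = 0 := congrFun h i
    have h2 : x i - y i = 0 := norm_eq_zero.mp h1
    exact sub_eq_zero.mp h2
  have hbound : ∀ i,
      μ i * a i ^ 2 - (∑ j ∈ Finset.univ.erase i, L i j * a j) * a i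
        ≤ ⟪G i x - G i y, x i - y i⟫ := by
    intro i
    simp only [ha]
    set u := Function.update x i (y i) with hu
    have h1 : μ i * ‖x i - y i‖ ^ 2 ≤ ⟪G i x - G i u, x i - y i⟫ :=
      hmono i x hx (y i) (hy i)
    have h2 : ‖G i u - G i y‖ ≤ ∑ j ∈ Finset.univ.erase i, L i j * ‖x j - y j‖ :=
      step1_path 𝒳 G L hlip i x y hx hy
    have h3 : |⟪G i u - G i y, x i - y i⟫| ≤ ‖G i u - G i y‖ * ‖x i - y i‖ :=
      abs_real_inner_le_norm _ _
    have h4 : ‖G i u - G i y‖ * ‖x i - y i‖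
        ≤ (∑ j ∈ Finset.univ.erase i, L i j * ‖x j - y j‖) * ‖x i - y i‖ :=
      mul_le_mul_of_nonneg_right h2 (norm_nonneg _)
    have h5 : ⟪G i x - G i y, x i - y i⟫
        = ⟪G i x - G i u, x i - y i⟫ + ⟪G i u - G i y, x i - y i⟫ := by
      rw [← inner_add_left, sub_add_sub_cancel]
    have h6 := neg_abs_le ⟪G i u - G i y, x i - y i⟫
    rw [h5]
    linarith
  calc (0:ℝ) < ∑ i, lam i *
        (μ i * a i ^ 2 - (∑ j ∈ Finset.univ.erase i, L i j * a j) * a i) :=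
      hkey a ha0 hane
    _ ≤ ∑ i, lam i * ⟪G i x - G i y, x i - y i⟫ :=
      Finset.sum_le_sum fun i _ =>
        mul_le_mul_of_nonneg_left (hbound i) (hlam i).le
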